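/- arXiv:1604.06219 — 2 statements merged into one kernel-verified Lean document; each statement's English description precedes it below -/
import Mathlib

section
/- If a control-affine system is locally accessible on a positively invariant set M ⊂ ℝ^d, then there are at most countably many invariant control sets in M. -/
open MeasureTheory Set Topology

/-- A control-affine system `ẋ = f₀(x) + ∑ vᵢ(t) fᵢ(x)` on `ℝ^d` with Lipschitz
continuous vector fields and compact control range `V ⊆ ℝ^m`.  The (unique, global)
solutions are bundled as the data `φ` together with their defining properties. -/
structure CAS (d m : ℕ) where
  /-- the drift vector field -/
  f0 : (Fin d → ℝ) → (Fin d → ℝ)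
  /-- the control vector fields -/
  f : Fin m → (Fin d → ℝ) → (Fin d → ℝ)
  /-- the control range -/
  V : Set (Fin m → ℝ)
  lip0 : ∃ K, LipschitzWith K f0
  lip : ∀ i, ∃ K, LipschitzWith K (f i)
  V_compact : IsCompact V
  /-- the solution map: `φ x v t` is the solution at time `t` starting at `x` with control `v` -/
  φ : (Fin d → ℝ) → (ℝ → (Fin m → ℝ)) → ℝ → (Fin d → ℝ)
  φ_init : ∀ x v, φ x v 0 = x
  φ_cont : ∀ x v, Continuous (φ x v)
  /-- solutions are (Carathéodory) solutions of the ODE -/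
  φ_sol : ∀ (x : Fin d → ℝ) (v : ℝ → (Fin m → ℝ)), Measurable v → (∀ t, v t ∈ V) →
    ∀ t, 0 ≤ t →
      φ x v t = x + ∫ s in (0:ℝ)..t, (f0 (φ x v s) + ∑ i, v s i • f (i) (φ x v s))

namespace CAS

variable {d m : ℕ}

/-- the set of admissible controls -/
def ctrl (S : CAS d m) : Set (ℝ → (Fin m → ℝ)) :=
  {v | Measurable v ∧ ∀ t, v t ∈ S.V}

/-- a control is piecewise constant if it has only finitely many discontinuities on
every bounded interval, i.e. it is constant between the members of a sequence of
switching times tending to infinity -/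
def PiecewiseConst (v : ℝ → (Fin m → ℝ)) : Prop :=
  ∃ τ : ℕ → ℝ, τ 0 = 0 ∧ StrictMono τ ∧ Filter.Tendsto τ Filter.atTop Filter.atTop ∧
    ∀ n, ∀ t ∈ Ico (τ n) (τ (n + 1)), v t = v (τ n)

/-- the reachable set from `x` -/
def reach (S : CAS d m) (x : Fin d → ℝ) : Set (Fin d → ℝ) :=
  {y | ∃ v ∈ S.ctrl, ∃ t ≥ (0:ℝ), S.φ x v t = y}

/-- the set reachable from `x` with piecewise constant controls -/
def reachPC (S : CAS d m) (x : Fin d → ℝ) : Set (Fin d → ℝ) :=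
  {y | ∃ v ∈ S.ctrl, PiecewiseConst v ∧ ∃ t ≥ (0:ℝ), S.φ x v t = y}

/-- the reachable set from `x` up to time `T` -/
def reachLe (S : CAS d m) (T : ℝ) (x : Fin d → ℝ) : Set (Fin d → ℝ) :=
  {y | ∃ v ∈ S.ctrl, ∃ t ∈ Icc (0:ℝ) T, S.φ x v t = y}

/-- the controllable set to `x` up to time `T` -/
def contrLe (S : CAS d m) (T : ℝ) (x : Fin d → ℝ) : Set (Fin d → ℝ) :=
  {y | ∃ v ∈ S.ctrl, ∃ t ∈ Icc (0:ℝ) T, S.φ y v t = x}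

/-- positive invariance of a set -/
def posInv (S : CAS d m) (M : Set (Fin d → ℝ)) : Prop :=
  ∀ x ∈ M, ∀ v ∈ S.ctrl, ∀ t ≥ (0:ℝ), S.φ x v t ∈ M

/-- invariance of a set -/
def inv (S : CAS d m) (M : Set (Fin d → ℝ)) : Prop :=
  ∀ t ≥ (0:ℝ), {y | ∃ x ∈ M, ∃ v ∈ S.ctrl, S.φ x v t = y} = M

/-- the two defining properties (i) controlled invariance and (ii) approximate
reachability of a control set -/
def controlSetProps (S : CAS d m) (D : Set (Fin d → ℝ)) : Prop :=
  (∀ x ∈ D, ∃ v ∈ S.ctrl, ∀ t ≥ (0:ℝ), S.φ x v t ∈ D) ∧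
  (∀ x ∈ D, D ⊆ closure (S.reach x))

/-- a control set: a maximal nonempty set with the properties `controlSetProps` -/
def isControlSet (S : CAS d m) (D : Set (Fin d → ℝ)) : Prop :=
  D.Nonempty ∧ S.controlSetProps D ∧
  ∀ D', D ⊆ D' → S.controlSetProps D' → D' = D

/-- an invariant control set -/
def isInvControlSet (S : CAS d m) (C : Set (Fin d → ℝ)) : Prop :=
  S.isControlSet C ∧ ∀ x ∈ C, closure C = closure (S.reach x)

/-- local accessibility at a point -/
def locAccAt (S : CAS d m) (x : Fin d → ℝ) : Prop :=
  ∀ T > (0:ℝ), ∀ N ∈ 𝓝 x,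
    (interior (S.reachLe T x) ∩ N).Nonempty ∧ (interior (S.contrLe T x) ∩ N).Nonempty

/-- local accessibility on a set -/
def locAccOn (S : CAS d m) (M : Set (Fin d → ℝ)) : Prop :=
  ∀ x ∈ M, S.locAccAt x

/-- the domain of attraction of a set -/
def domAttr (S : CAS d m) (C : Set (Fin d → ℝ)) : Set (Fin d → ℝ) :=
  {x | (closure (S.reach x) ∩ C).Nonempty}

/-- the strict domain of attraction of an invariant control set -/
def domAttrStrict (S : CAS d m) (C : Set (Fin d → ℝ)) : Set (Fin d → ℝ) :=
  {x | (closure (S.reach x) ∩ C).Nonempty ∧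
    ∀ C', S.isInvControlSet C' → (closure (S.reach x) ∩ C').Nonempty → C' = C}

end CAS


section AuxGronwall

open intervalIntegral

variable {E : Type*} [NormedAddCommGroup E] [NormedSpace ℝ E]

/-- Uniqueness of solutions of an integral equation with Lipschitz right-hand side. -/
theorem integral_eq_unique {G : ℝ → E → E} {L : ℝ} (hL : 0 ≤ L)
    (hGlip : ∀ σ p q, ‖G σ p - G σ q‖ ≤ L * ‖p - q‖)
    {y z : ℝ → E} (hy : Continuous y) (hz : Continuous z)
    {a b : ℝ} (hab : a ≤ b)
    (hyint : IntervalIntegrable (fun σ => G σ (y σ)) volume a b)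
    (hzint : IntervalIntegrable (fun σ => G σ (z σ)) volume a b)
    (hy_eq : ∀ r ∈ Icc a b, y r = y a + ∫ σ in a..r, G σ (y σ))
    (hz_eq : ∀ r ∈ Icc a b, z r = z a + ∫ σ in a..r, G σ (z σ))
    (h0 : y a = z a) : ∀ r ∈ Icc a b, y r = z r := by
  set δ : ℝ → ℝ := fun r => ‖y r - z r‖ with hδ
  have hδcont : Continuous δ := (hy.sub hz).norm
  have hδnonneg : ∀ r, 0 ≤ δ r := fun r => norm_nonneg _
  -- key integral inequality
  have key : ∀ r ∈ Icc a b, δ r ≤ L * ∫ σ in a..r, δ σ := by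
    intro r hr
    have har : a ≤ r := hr.1
    have hsub : uIcc a r ⊆ uIcc a b := uIcc_subset_uIcc left_mem_uIcc
      (by rw [uIcc_of_le hab]; exact hr)
    have hyi := hyint.mono_set hsub
    have hzi := hzint.mono_set hsub
    have : y r - z r = ∫ σ in a..r, (G σ (y σ) - G σ (z σ)) := by
      rw [intervalIntegral.integral_sub hyi hzi]
      rw [hy_eq r hr, hz_eq r hr, h0]; abel
    calc δ r = ‖∫ σ in a..r, (G σ (y σ) - G σ (z σ))‖ := by
          show ‖y r - z r‖ = _; rw [this]
      _ ≤ ∫ σ in a..r, ‖G σ (y σ) - G σ (z σ)‖ :=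
          intervalIntegral.norm_integral_le_integral_norm har
      _ ≤ ∫ σ in a..r, L * δ σ := by
          apply intervalIntegral.integral_mono_on har ((hyi.sub hzi).norm)
            ((hδcont.const_smul L).intervalIntegrable a r)
          intro σ _
          exact hGlip σ (y σ) (z σ)
      _ = L * ∫ σ in a..r, δ σ := intervalIntegral.integral_const_mul L δ
  -- Gronwall
  set h : ℝ → ℝ := fun r => ∫ σ in a..r, δ σ with hh
  have hderiv : ∀ r : ℝ, HasDerivAt h (δ r) r := fun r =>
    intervalIntegral.integral_hasDerivAt_right (hδcont.intervalIntegrable a r)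
      (hδcont.stronglyMeasurableAtFilter _ _) hδcont.continuousAt
  have hhnonneg : ∀ r ∈ Icc a b, 0 ≤ h r := fun r hr =>
    intervalIntegral.integral_nonneg hr.1 (fun σ _ => hδnonneg σ)
  have hg : ∀ r ∈ Icc a b, ‖h r‖ ≤ gronwallBound 0 L 0 (r - a) := by
    apply norm_le_gronwallBound_of_norm_deriv_right_le
      (fun r _ => (hderiv r).continuousAt.continuousWithinAt)
      (fun r _ => (hderiv r).hasDerivWithinAt)
    · simp [hh]
    · intro r hr
      have h1 : δ r ≤ L * h r := key r (Ico_subset_Icc_self hr)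
      have h2 : 0 ≤ h r := hhnonneg r (Ico_subset_Icc_self hr)
      rw [Real.norm_of_nonneg (hδnonneg r), Real.norm_of_nonneg h2, add_zero]
      exact h1
  intro r hr
  have : h r = 0 := by
    have := hg r hr
    rw [gronwallBound_ε0_δ0] at this
    have := le_antisymm (by simpa [Real.norm_of_nonneg (hhnonneg r hr)] using this) (hhnonneg r hr)
    exact this
  have hδr : δ r ≤ 0 := by
    have h1 : δ r ≤ L * h r := key r hr
    rw [‹h r = 0›, mul_zero] at h1
    exact h1
  have : δ r = 0 := le_antisymm hδr (hδnonneg r)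
  exact sub_eq_zero.mp (norm_eq_zero.mp this)


end AuxGronwall

section AuxCAS

variable {d m : ℕ}


theorem V_bound (V : Set (Fin m → ℝ)) (hV : IsCompact V) : ∃ B ≥ (0:ℝ), ∀ w ∈ V, ‖w‖ ≤ B := by
  obtain ⟨r, hr⟩ := hV.isBounded.subset_closedBall 0
  exact ⟨max r 0, le_max_right _ _, fun w hw =>
    (mem_closedBall_zero_iff.mp (hr hw)).trans (le_max_left _ _)⟩

theorem F_lip (f0 : (Fin d → ℝ) → (Fin d → ℝ)) (f : Fin m → (Fin d → ℝ) → (Fin d → ℝ))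
    (K0 : NNReal) (h0 : LipschitzWith K0 f0) (K : Fin m → NNReal) (hK : ∀ i, LipschitzWith (K i) (f i))
    (B : ℝ) (hB : 0 ≤ B) (V : Set (Fin m → ℝ)) (hVB : ∀ w ∈ V, ‖w‖ ≤ B)
    (v : ℝ → Fin m → ℝ) (hvV : ∀ t, v t ∈ V) :
    ∀ (σ : ℝ) (p q : Fin d → ℝ),
      ‖(f0 p + ∑ i, v σ i • f i p) - (f0 q + ∑ i, v σ i • f i q)‖
        ≤ ((K0 : ℝ) + B * ∑ i, (K i : ℝ)) * ‖p - q‖ := by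
  intro σ p q
  have hre : (f0 p + ∑ i, v σ i • f i p) - (f0 q + ∑ i, v σ i • f i q)
      = (f0 p - f0 q) + ∑ i, v σ i • (f i p - f i q) := by
    rw [Finset.sum_congr rfl (fun i _ => smul_sub (v σ i) (f i p) (f i q)),
      Finset.sum_sub_distrib]
    abel
  rw [hre]
  have h1 : ‖f0 p - f0 q‖ ≤ (K0 : ℝ) * ‖p - q‖ := by
    simpa [dist_eq_norm] using h0.dist_le_mul p q
  have h2 : ∀ i : Fin m, ‖v σ i • (f i p - f i q)‖ ≤ B * ((K i : ℝ) * ‖p - q‖) := by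
    intro i
    rw [norm_smul]
    have hvi : ‖v σ i‖ ≤ B := (norm_le_pi_norm (v σ) i).trans (hVB _ (hvV σ))
    have hfi : ‖f i p - f i q‖ ≤ (K i : ℝ) * ‖p - q‖ := by
      simpa [dist_eq_norm] using (hK i).dist_le_mul p q
    exact mul_le_mul hvi hfi (norm_nonneg _) hB
  calc ‖(f0 p - f0 q) + ∑ i, v σ i • (f i p - f i q)‖
      ≤ ‖f0 p - f0 q‖ + ∑ i, ‖v σ i • (f i p - f i q)‖ :=
        (norm_add_le _ _).trans (by gcongr; exact norm_sum_le _ _)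
    _ ≤ (K0 : ℝ) * ‖p - q‖ + ∑ i, B * ((K i : ℝ) * ‖p - q‖) :=
        add_le_add h1 (Finset.sum_le_sum fun i _ => h2 i)
    _ = ((K0 : ℝ) + B * ∑ i, (K i : ℝ)) * ‖p - q‖ := by
        rw [← Finset.mul_sum, ← Finset.sum_mul]; ring

theorem F_integrable (f0 : (Fin d → ℝ) → (Fin d → ℝ)) (f : Fin m → (Fin d → ℝ) → (Fin d → ℝ))
    (hc0 : Continuous f0) (hc : ∀ i, Continuous (f i))
    (B : ℝ) (V : Set (Fin m → ℝ)) (hVB : ∀ w ∈ V, ‖w‖ ≤ B)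
    (v : ℝ → Fin m → ℝ) (hv : Measurable v) (hvV : ∀ t, v t ∈ V)
    (ψ : ℝ → Fin d → ℝ) (hψ : Continuous ψ) (a b : ℝ) :
    IntervalIntegrable (fun σ => f0 (ψ σ) + ∑ i, v σ i • f i (ψ σ)) volume a b := by
  rw [intervalIntegrable_iff]
  have hmeas : Measurable (fun σ => f0 (ψ σ) + ∑ i, v σ i • f i (ψ σ)) := by
    apply Measurable.add
    · exact (hc0.comp hψ).measurable
    · exact Finset.measurable_sum _ (fun i _ =>
        ((measurable_pi_apply i).comp hv).smul ((hc i).comp hψ).measurable)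
  obtain ⟨C, hC⟩ := (isCompact_uIcc (a := a) (b := b)).exists_bound_of_continuousOn
    (f := fun σ => ‖f0 (ψ σ)‖ + B * ∑ i, ‖f i (ψ σ)‖)
    (by fun_prop)
  apply MeasureTheory.Integrable.mono' (g := fun _ => C)
    ((integrableOn_const_iff).mpr (Or.inr measure_Ioc_lt_top))
    hmeas.aestronglyMeasurable
  filter_upwards [MeasureTheory.ae_restrict_mem measurableSet_uIoc] with σ hσ
  have hσ' : σ ∈ uIcc a b := uIoc_subset_uIcc hσ
  have key : ‖f0 (ψ σ) + ∑ i, v σ i • f i (ψ σ)‖ ≤ ‖f0 (ψ σ)‖ + B * ∑ i, ‖f i (ψ σ)‖ := by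
    refine (norm_add_le _ _).trans (add_le_add le_rfl ?_)
    refine (norm_sum_le _ _).trans ?_
    rw [Finset.mul_sum]
    refine Finset.sum_le_sum fun i _ => ?_
    rw [norm_smul]
    refine mul_le_mul ((norm_le_pi_norm (v σ) i).trans (hVB _ (hvV σ))) le_rfl (norm_nonneg _) ?_
    exact le_trans (norm_nonneg _) ((norm_le_pi_norm (v σ) i).trans (hVB _ (hvV σ)))
  exact key.trans ((Real.le_norm_self _).trans (hC σ hσ'))


theorem CAS.reach_trans (S : CAS d m) {x q y : Fin d → ℝ}
    (hq : q ∈ S.reach x) (hy : y ∈ S.reach q) : y ∈ S.reach x := by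
  obtain ⟨v, ⟨hvm, hvV⟩, s, hs, hvq⟩ := hq
  obtain ⟨w, ⟨hwm, hwV⟩, t, ht, hwy⟩ := hy
  obtain ⟨B, hB0, hVB⟩ := V_bound S.V S.V_compact
  obtain ⟨K0, h0⟩ := S.lip0
  choose K hK using S.lip
  have hL : (0:ℝ) ≤ (K0 : ℝ) + B * ∑ i, (K i : ℝ) := by positivity
  classical
  let u : ℝ → Fin m → ℝ := fun r => if r < s then v r else w (r - s)
  have hum : Measurable u :=
    Measurable.ite measurableSet_Iio hvm (hwm.comp (measurable_id.sub_const s))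
  have huV : ∀ r, u r ∈ S.V := fun r => by
    by_cases h : r < s <;> simp only [u, h, if_true, if_false, ite_true, ite_false] <;>
      [exact hvV r; exact hwV (r - s)]
  have hGlip := F_lip S.f0 S.f K0 h0 K hK B hB0 S.V hVB u huV
  have hcf0 : Continuous S.f0 := h0.continuous
  have hcf : ∀ i, Continuous (S.f i) := fun i => (hK i).continuous
  have hy1c : Continuous (S.φ x u) := S.φ_cont x u
  have hy1int : ∀ a b : ℝ, IntervalIntegrable
      (fun σ => S.f0 (S.φ x u σ) + ∑ i, u σ i • S.f i (S.φ x u σ)) volume a b :=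
    fun a b => F_integrable S.f0 S.f hcf0 hcf B S.V hVB u hum huV _ hy1c a b
  have hae : ∀ᵐ σ : ℝ, σ ≠ s := by
    rw [MeasureTheory.ae_iff]
    simp only [not_not, setOf_eq_eq_singleton]
    exact Real.volume_singleton
  -- step 1: φ x u = φ x v on [0, s]
  have step1 : ∀ r ∈ Icc (0:ℝ) s, S.φ x u r = S.φ x v r := by
    refine integral_eq_unique hL hGlip hy1c (S.φ_cont x v) hs (hy1int 0 s)
      (F_integrable S.f0 S.f hcf0 hcf B S.V hVB u hum huV _ (S.φ_cont x v) 0 s) ?_ ?_ ?_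
    · intro r hr
      rw [S.φ_init x u]
      exact S.φ_sol x u hum huV r hr.1
    · intro r hr
      rw [S.φ_init x v]
      rw [S.φ_sol x v hvm hvV r hr.1]
      congr 1
      apply intervalIntegral.integral_congr_ae
      filter_upwards [hae] with σ hσs hσmem
      have hσr : σ ∈ Ioc (0:ℝ) r := by
        rwa [uIoc_of_le hr.1] at hσmem
      have hσlt : σ < s := lt_of_le_of_ne (hσr.2.trans hr.2) hσs
      simp only [u, if_pos hσlt]
    · rw [S.φ_init x u, S.φ_init x v]
  have hφus : S.φ x u s = q := by rw [step1 s ⟨le_refl 0 |>.trans hs, le_refl s⟩]; exact hvq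
  -- step 2: φ x u (s + ·) = φ q w on [s, s + t]
  have hz2c : Continuous (fun r => S.φ q w (r - s)) :=
    (S.φ_cont q w).comp (continuous_sub_right s)
  have step2 : ∀ r ∈ Icc s (s + t), S.φ x u r = S.φ q w (r - s) := by
    refine integral_eq_unique hL hGlip hy1c hz2c (by linarith) (hy1int s (s + t))
      (F_integrable S.f0 S.f hcf0 hcf B S.V hVB u hum huV _ hz2c s (s + t)) ?_ ?_ ?_
    · intro r hr
      have hr0 : (0:ℝ) ≤ r := hs.trans hr.1
      rw [S.φ_sol x u hum huV r hr0]
      rw [← intervalIntegral.integral_add_adjacent_intervals (hy1int 0 s) (hy1int s r)]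
      rw [S.φ_sol x u hum huV s hs]
      abel
    · intro r hr
      have hrs : (0:ℝ) ≤ r - s := by linarith [hr.1]
      have : S.φ q w (r - s) = q + ∫ σ in (0:ℝ)..(r - s),
          (S.f0 (S.φ q w σ) + ∑ i, w σ i • S.f i (S.φ q w σ)) :=
        S.φ_sol q w hwm hwV (r - s) hrs
      rw [this]
      have hs0 : S.φ q w (s - s) = q := by rw [sub_self, S.φ_init]
      rw [hs0]
      congr 1
      have hcv : (∫ σ in s..r, (S.f0 (S.φ q w (σ - s)) + ∑ i, w (σ - s) i • S.f i (S.φ q w (σ - s))))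
          = ∫ σ in (0:ℝ)..(r - s), (S.f0 (S.φ q w σ) + ∑ i, w σ i • S.f i (S.φ q w σ)) := by
        have := intervalIntegral.integral_comp_sub_right
          (f := fun σ => S.f0 (S.φ q w σ) + ∑ i, w σ i • S.f i (S.φ q w σ)) (a := s) (b := r) s
        simpa using this
      rw [← hcv]
      apply intervalIntegral.integral_congr
      intro σ hσ
      rw [uIcc_of_le (by linarith [hr.1] : s ≤ r)] at hσ
      have hns : ¬ (σ < s) := not_lt.mpr hσ.1
      simp only [u, if_neg hns]
    · rw [sub_self, S.φ_init]
      exact hφus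
  have : S.φ x u (s + t) = y := by
    rw [step2 (s + t) ⟨by linarith, le_refl _⟩, add_sub_cancel_left]
    exact hwy
  exact ⟨u, ⟨hum, huV⟩, s + t, by linarith, this⟩


end AuxCAS

section MainAux

variable {d m : ℕ}

theorem CAS.reachLe_subset_reach (S : CAS d m) (T : ℝ) (x : Fin d → ℝ) :
    S.reachLe T x ⊆ S.reach x := fun y ⟨v, hv, t, ht, h⟩ => ⟨v, hv, t, ht.1, h⟩

theorem CAS.invCS_eq_of_closure_eq (S : CAS d m) {C C' : Set (Fin d → ℝ)}
    (hC : S.isInvControlSet C) (hC' : S.isInvControlSet C')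
    (hcl : closure C = closure C') : C = C' := by
  have hprops : S.controlSetProps (C ∪ C') := by
    constructor
    · rintro x (hx | hx)
      · obtain ⟨v, hv, hinv⟩ := hC.1.2.1.1 x hx
        exact ⟨v, hv, fun t ht => Or.inl (hinv t ht)⟩
      · obtain ⟨v, hv, hinv⟩ := hC'.1.2.1.1 x hx
        exact ⟨v, hv, fun t ht => Or.inr (hinv t ht)⟩
    · rintro x (hx | hx)
      · rw [← hC.2 x hx]
        exact union_subset subset_closure (hcl ▸ subset_closure)
      · rw [← hC'.2 x hx]
        exact union_subset (hcl ▸ subset_closure) subset_closure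
  have h1 := hC.1.2.2 (C ∪ C') subset_union_left hprops
  have h2 := hC'.1.2.2 (C ∪ C') subset_union_right hprops
  exact h1.symm.trans h2

theorem CAS.invCS_eq_of_interior_meet (S : CAS d m) {C C' : Set (Fin d → ℝ)}
    (hC : S.isInvControlSet C) (hC' : S.isInvControlSet C')
    {xc xc' : Fin d → ℝ} (hx : xc ∈ C) (hx' : xc' ∈ C')
    (hz : (interior (S.reachLe 1 xc) ∩ interior (S.reachLe 1 xc')).Nonempty) : C = C' := by
  obtain ⟨z, hz1, hz2⟩ := hz
  set O := interior (S.reachLe 1 xc) ∩ interior (S.reachLe 1 xc') with hO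
  have hOopen : IsOpen O := isOpen_interior.inter isOpen_interior
  have hOr : O ⊆ S.reach xc := fun y hy =>
    S.reachLe_subset_reach 1 xc (interior_subset hy.1)
  have hOr' : O ⊆ S.reach xc' := fun y hy =>
    S.reachLe_subset_reach 1 xc' (interior_subset hy.2)
  have hOC : O ⊆ closure C := fun y hy => by
    rw [hC.2 xc hx]; exact subset_closure (hOr hy)
  have hOC' : O ⊆ closure C' := fun y hy => by
    rw [hC'.2 xc' hx']; exact subset_closure (hOr' hy)
  have hzO : z ∈ O := ⟨hz1, hz2⟩
  obtain ⟨q, hqO, hqC'⟩ := mem_closure_iff_nhds.mp (hOC' hzO) O (hOopen.mem_nhds hzO)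
  obtain ⟨p, hpO, hpC⟩ := mem_closure_iff_nhds.mp (hOC hzO) O (hOopen.mem_nhds hzO)
  have h1 : closure C' ⊆ closure C := by
    rw [hC'.2 q hqC']
    refine closure_minimal (fun y hy => ?_) isClosed_closure
    rw [hC.2 xc hx]
    exact subset_closure (S.reach_trans (hOr hqO) hy)
  have h2 : closure C ⊆ closure C' := by
    rw [hC.2 p hpC]
    refine closure_minimal (fun y hy => ?_) isClosed_closure
    rw [hC'.2 xc' hx']
    exact subset_closure (S.reach_trans (hOr' hpO) hy)
  exact S.invCS_eq_of_closure_eq hC hC' (le_antisymm h2 h1)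

end MainAux

/-- If the system is locally accessible on a positively invariant
set `M`, then there are at most countably many invariant control sets in `M`. -/
theorem stmt6 {d m : ℕ} (S : CAS d m) (M : Set (Fin d → ℝ))
    (hM : S.posInv M) (hacc : S.locAccOn M) :
    {C : Set (Fin d → ℝ) | S.isInvControlSet C ∧ C ⊆ M}.Countable := by
  classical
  have hpt : ∀ C ∈ {C : Set (Fin d → ℝ) | S.isInvControlSet C ∧ C ⊆ M}, C.Nonempty :=
    fun C hC => hC.1.1.1
  set pt : Set (Fin d → ℝ) → (Fin d → ℝ) :=
    fun C => if h : C.Nonempty then h.choose else 0 with hptdef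
  have hptmem : ∀ C, C.Nonempty → pt C ∈ C := by
    intro C hCne
    rw [hptdef]
    simp only [dif_pos hCne]
    exact hCne.choose_spec
  apply Set.PairwiseDisjoint.countable_of_isOpen
    (s := fun C => interior (S.reachLe 1 (pt C)))
  · intro C hC C' hC' hne
    rw [Function.onFun]
    by_contra hdis
    obtain ⟨z, hzmem⟩ := Set.not_disjoint_iff_nonempty_inter.mp hdis
    exact hne (S.invCS_eq_of_interior_meet hC.1 hC'.1
      (hptmem C (hpt C hC)) (hptmem C' (hpt C' hC')) ⟨z, hzmem⟩)
  · exact fun C _ => isOpen_interior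
  · intro C hC
    have hxM : pt C ∈ M := hC.2 (hptmem C (hpt C hC))
    have := (hacc (pt C) hxM 1 one_pos univ Filter.univ_mem).1
    simpa using this
end

section
/- Let a control-affine system be locally accessible on a positively invariant set M. Then every invariant control set C ⊂ M has nonempty interior, satisfies cl_M(int C) = C, and both C and int C are positively invariant; moreover int C ⊂ O⁺(x) and C = cl_M O⁺(x) for all x ∈ C. -/
open MeasureTheory Set Topology

namespace CAS

open intervalIntegral Real

variable {d m : ℕ}

/-- The integrand of the controlled ODE. -/
def G (S : CAS d m) (v : ℝ → Fin m → ℝ) (s : ℝ) (z : Fin d → ℝ) : Fin d → ℝ :=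
  S.f0 z + ∑ i, v s i • S.f i z

lemma φ_sol' (S : CAS d m) {v} (hv : v ∈ S.ctrl) (x : Fin d → ℝ) {t : ℝ} (ht : 0 ≤ t) :
    S.φ x v t = S.φ x v 0 + ∫ s in (0:ℝ)..t, S.G v s (S.φ x v s) := by
  rw [S.φ_init]; exact S.φ_sol x v hv.1 hv.2 t ht

lemma exists_LR (S : CAS d m) :
    ∃ L R : ℝ, 1 ≤ L ∧ (∀ w ∈ S.V, ‖w‖ ≤ R) ∧
      ∀ v ∈ S.ctrl, ∀ (s : ℝ) (z z' : Fin d → ℝ),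
        ‖S.G v s z - S.G v s z'‖ ≤ L * ‖z - z'‖ := by
  obtain ⟨K0, hK0⟩ := S.lip0
  choose K hK using S.lip
  obtain ⟨R0, hR0⟩ := S.V_compact.isBounded.exists_norm_le
  set R : ℝ := max R0 0 with hRdef
  refine ⟨max 1 ((K0 : ℝ) + R * ∑ i, (K i : ℝ)), R, le_max_left _ _,
    fun w hw => (hR0 w hw).trans (le_max_left _ _), ?_⟩
  intro v hv s z z'
  have hRnn : 0 ≤ R := le_max_right _ _
  have hvb : ∀ i, |v s i| ≤ R := by
    intro i
    calc |v s i| = ‖v s i‖ := rfl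
      _ ≤ ‖v s‖ := norm_le_pi_norm (v s) i
      _ ≤ R0 := hR0 _ (hv.2 s)
      _ ≤ R := le_max_left _ _
  have hgsub : S.G v s z - S.G v s z'
      = (S.f0 z - S.f0 z') + ∑ i, v s i • (S.f i z - S.f i z') := by
    simp only [G, smul_sub, Finset.sum_sub_distrib]
    abel
  have h0 : ‖S.f0 z - S.f0 z'‖ ≤ (K0 : ℝ) * ‖z - z'‖ := by
    have := hK0.dist_le_mul z z'
    rwa [dist_eq_norm, dist_eq_norm] at this
  have hi : ∀ i, ‖v s i • (S.f i z - S.f i z')‖ ≤ R * ((K i : ℝ) * ‖z - z'‖) := by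
    intro i
    rw [norm_smul, Real.norm_eq_abs]
    have h1 : ‖S.f i z - S.f i z'‖ ≤ (K i : ℝ) * ‖z - z'‖ := by
      have := (hK i).dist_le_mul z z'
      rwa [dist_eq_norm, dist_eq_norm] at this
    exact mul_le_mul (hvb i) h1 (norm_nonneg _) hRnn
  calc ‖S.G v s z - S.G v s z'‖
      ≤ ‖S.f0 z - S.f0 z'‖ + ‖∑ i, v s i • (S.f i z - S.f i z')‖ := by
        rw [hgsub]; exact norm_add_le _ _
    _ ≤ (K0 : ℝ) * ‖z - z'‖ + ∑ i, R * ((K i : ℝ) * ‖z - z'‖) :=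
        add_le_add h0 ((norm_sum_le _ _).trans (Finset.sum_le_sum fun i _ => hi i))
    _ = ((K0 : ℝ) + R * ∑ i, (K i : ℝ)) * ‖z - z'‖ := by
        conv_lhs => rw [← Finset.mul_sum, ← Finset.sum_mul]
        rw [add_mul, mul_assoc]
    _ ≤ max 1 ((K0 : ℝ) + R * ∑ i, (K i : ℝ)) * ‖z - z'‖ :=
        mul_le_mul_of_nonneg_right (le_max_right _ _) (norm_nonneg _)

lemma G_cont_of_cont (S : CAS d m) (i : Fin m) : Continuous (S.f i) :=
  ((S.lip i).choose_spec).continuous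

lemma G_integrable (S : CAS d m) {v} (hv : v ∈ S.ctrl) {R : ℝ}
    (hR : ∀ w ∈ S.V, ‖w‖ ≤ R)
    {a : ℝ → Fin d → ℝ} (ha : Continuous a) (t₀ t₁ : ℝ) :
    IntervalIntegrable (fun s => S.G v s (a s)) MeasureTheory.volume t₀ t₁ := by
  have hf0c : Continuous S.f0 := (S.lip0.choose_spec).continuous
  have hmeas : Measurable fun s => S.G v s (a s) := by
    apply Measurable.add
    · exact (hf0c.comp ha).measurable
    · exact Finset.measurable_sum _ fun i _ =>
        (((measurable_pi_apply i).comp hv.1)).smul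
          (((S.G_cont_of_cont i).comp ha).measurable)
  have hdomc : Continuous fun s => ‖S.f0 (a s)‖ + ∑ i, R * ‖S.f i (a s)‖ := by
    apply Continuous.add
    · exact (hf0c.comp ha).norm
    · exact continuous_finset_sum _ fun i _ =>
        continuous_const.mul ((S.G_cont_of_cont i).comp ha).norm
  refine (hdomc.intervalIntegrable t₀ t₁).mono_fun hmeas.aestronglyMeasurable ?_
  filter_upwards with s
  have hb : ∀ i, ‖v s i • S.f i (a s)‖ ≤ R * ‖S.f i (a s)‖ := by
    intro i
    rw [norm_smul]
    refine mul_le_mul_of_nonneg_right ?_ (norm_nonneg _)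
    calc ‖v s i‖ ≤ ‖v s‖ := norm_le_pi_norm (v s) i
      _ ≤ R := hR _ (hv.2 s)
  calc ‖S.G v s (a s)‖ ≤ ‖S.f0 (a s)‖ + ‖∑ i, v s i • S.f i (a s)‖ := norm_add_le _ _
    _ ≤ ‖S.f0 (a s)‖ + ∑ i, R * ‖S.f i (a s)‖ :=
        add_le_add_right ((norm_sum_le _ _).trans (Finset.sum_le_sum fun i _ => hb i)) _
    _ ≤ ‖‖S.f0 (a s)‖ + ∑ i, R * ‖S.f i (a s)‖‖ := le_abs_self _

/-- Master Grönwall estimate for two solutions whose controls agree on `[0, T]`. -/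
lemma gronwall (S : CAS d m) {L R : ℝ} (hL1 : 1 ≤ L)
    (hR : ∀ w ∈ S.V, ‖w‖ ≤ R)
    (hLip : ∀ v ∈ S.ctrl, ∀ (s : ℝ) (z z' : Fin d → ℝ),
      ‖S.G v s z - S.G v s z'‖ ≤ L * ‖z - z'‖)
    {T : ℝ} (hT : 0 ≤ T) {va vb} (hva : va ∈ S.ctrl) (hvb : vb ∈ S.ctrl)
    {a b : ℝ → Fin d → ℝ} (hca : Continuous a) (hcb : Continuous b)
    (hsa : ∀ t ∈ Icc (0:ℝ) T, a t = a 0 + ∫ s in (0:ℝ)..t, S.G va s (a s))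
    (hsb : ∀ t ∈ Icc (0:ℝ) T, b t = b 0 + ∫ s in (0:ℝ)..t, S.G vb s (b s))
    (heq : ∀ s ∈ Icc (0:ℝ) T, va s = vb s) :
    ∀ t ∈ Icc (0:ℝ) T, ‖a t - b t‖ ≤ ‖a 0 - b 0‖ * Real.exp (L * t) := by
  have hL0 : (0:ℝ) < L := lt_of_lt_of_le one_pos hL1
  set δ : ℝ := ‖a 0 - b 0‖ with hδdef
  set h : ℝ → ℝ := fun s => ‖a s - b s‖ with hhdef
  have hch : Continuous h := (hca.sub hcb).norm
  have hLh : Continuous fun s => L * h s := continuous_const.mul hch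
  set g : ℝ → ℝ := fun t => δ + ∫ s in (0:ℝ)..t, L * h s with hgdef
  have hgderiv : ∀ x : ℝ, HasDerivAt g (L * h x) x := by
    intro x
    exact (intervalIntegral.integral_hasDerivAt_right (hLh.intervalIntegrable 0 x)
      (hLh.stronglyMeasurableAtFilter _ _) hLh.continuousAt).const_add δ
  have hgc : Continuous g := continuous_iff_continuousAt.2 fun x => (hgderiv x).continuousAt
  have hgnn : ∀ t ∈ Icc (0:ℝ) T, 0 ≤ g t := by
    intro t ht
    have : 0 ≤ ∫ s in (0:ℝ)..t, L * h s :=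
      intervalIntegral.integral_nonneg ht.1 fun u _ =>
        mul_nonneg hL0.le (norm_nonneg _)
    exact add_nonneg (norm_nonneg _) this
  have hhg : ∀ t ∈ Icc (0:ℝ) T, h t ≤ g t := by
    intro t ht
    have hIa := S.G_integrable hva hR hca 0 t
    have hIb := S.G_integrable hvb hR hcb 0 t
    have key : a t - b t
        = (a 0 - b 0) + ∫ s in (0:ℝ)..t, (S.G va s (a s) - S.G vb s (b s)) := by
      rw [intervalIntegral.integral_sub hIa hIb, hsa t ht, hsb t ht]
      abel
    have hptw : ∀ s ∈ Icc (0:ℝ) t, ‖S.G va s (a s) - S.G vb s (b s)‖ ≤ L * h s := by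
      intro s hs
      have hveq : va s = vb s := heq s ⟨hs.1, hs.2.trans ht.2⟩
      have : S.G vb s (b s) = S.G va s (b s) := by simp only [G]; rw [hveq]
      rw [this]
      exact hLip va hva s (a s) (b s)
    calc h t = ‖(a 0 - b 0) + ∫ s in (0:ℝ)..t, (S.G va s (a s) - S.G vb s (b s))‖ := by
          show ‖a t - b t‖ = _; rw [key]
      _ ≤ δ + ‖∫ s in (0:ℝ)..t, (S.G va s (a s) - S.G vb s (b s))‖ := norm_add_le _ _
      _ ≤ δ + ∫ s in (0:ℝ)..t, ‖S.G va s (a s) - S.G vb s (b s)‖ :=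
          add_le_add_right (intervalIntegral.norm_integral_le_integral_norm ht.1) δ
      _ ≤ δ + ∫ s in (0:ℝ)..t, L * h s := by
          refine add_le_add_right ?_ δ
          exact intervalIntegral.integral_mono_on ht.1 (hIa.sub hIb).norm
            (hLh.intervalIntegrable 0 t) hptw
  have main : ∀ x ∈ Icc (0:ℝ) T, ‖g x‖ ≤ gronwallBound δ L 0 (x - 0) := by
    apply norm_le_gronwallBound_of_norm_deriv_right_le hgc.continuousOn
    · exact fun x _ => (hgderiv x).hasDerivWithinAt
    · have h0 : g 0 = δ := by simp [hgdef]
      have hδnn : (0:ℝ) ≤ δ := by rw [hδdef]; exact norm_nonneg _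
      rw [h0, Real.norm_eq_abs, abs_of_nonneg hδnn]
    · intro x hx
      have hx' : x ∈ Icc (0:ℝ) T := ⟨hx.1, hx.2.le⟩
      rw [Real.norm_eq_abs, abs_of_nonneg (mul_nonneg hL0.le (norm_nonneg _)),
        Real.norm_eq_abs, abs_of_nonneg (hgnn x hx')]
      nlinarith [hhg x hx']
  intro t ht
  have h1 := main t ht
  rw [gronwallBound_ε0, sub_zero, Real.norm_eq_abs] at h1
  exact (hhg t ht).trans ((le_abs_self _).trans h1)

/-- Uniqueness: a continuous solution of the integral equation is `φ`. -/
lemma sol_eq_φ (S : CAS d m) {L R : ℝ} (hL1 : 1 ≤ L)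
    (hR : ∀ w ∈ S.V, ‖w‖ ≤ R)
    (hLip : ∀ v ∈ S.ctrl, ∀ (s : ℝ) (z z' : Fin d → ℝ),
      ‖S.G v s z - S.G v s z'‖ ≤ L * ‖z - z'‖)
    {v} (hv : v ∈ S.ctrl) {a : ℝ → Fin d → ℝ} (hca : Continuous a)
    (hsa : ∀ t, 0 ≤ t → a t = a 0 + ∫ s in (0:ℝ)..t, S.G v s (a s)) :
    ∀ t, 0 ≤ t → a t = S.φ (a 0) v t := by
  intro t ht
  have := S.gronwall hL1 hR hLip ht hv hv hca (S.φ_cont (a 0) v)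
    (fun u hu => hsa u hu.1) (fun u hu => S.φ_sol' hv (a 0) hu.1)
    (fun _ _ => rfl) t ⟨ht, le_rfl⟩
  rw [S.φ_init, sub_self, norm_zero, zero_mul] at this
  exact sub_eq_zero.1 (norm_le_zero_iff.1 this)

/-- Lipschitz dependence on the initial value. -/
lemma φ_lip (S : CAS d m) {L R : ℝ} (hL1 : 1 ≤ L)
    (hR : ∀ w ∈ S.V, ‖w‖ ≤ R)
    (hLip : ∀ v ∈ S.ctrl, ∀ (s : ℝ) (z z' : Fin d → ℝ),
      ‖S.G v s z - S.G v s z'‖ ≤ L * ‖z - z'‖)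
    {v} (hv : v ∈ S.ctrl) (x y : Fin d → ℝ) {t : ℝ} (ht : 0 ≤ t) :
    ‖S.φ x v t - S.φ y v t‖ ≤ ‖x - y‖ * Real.exp (L * t) := by
  have := S.gronwall hL1 hR hLip ht hv hv (S.φ_cont x v) (S.φ_cont y v)
    (fun u hu => S.φ_sol' hv x hu.1) (fun u hu => S.φ_sol' hv y hu.1)
    (fun _ _ => rfl) t ⟨ht, le_rfl⟩
  rwa [S.φ_init, S.φ_init] at this

lemma φ_cont_x (S : CAS d m) {L R : ℝ} (hL1 : 1 ≤ L)
    (hR : ∀ w ∈ S.V, ‖w‖ ≤ R)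
    (hLip : ∀ v ∈ S.ctrl, ∀ (s : ℝ) (z z' : Fin d → ℝ),
      ‖S.G v s z - S.G v s z'‖ ≤ L * ‖z - z'‖)
    {v} (hv : v ∈ S.ctrl) {t : ℝ} (ht : 0 ≤ t) :
    Continuous fun z => S.φ z v t := by
  have : LipschitzWith (Real.exp (L * t)).toNNReal fun z => S.φ z v t := by
    apply LipschitzWith.of_dist_le_mul
    intro x y
    rw [dist_eq_norm, dist_eq_norm, Real.coe_toNNReal _ (Real.exp_pos _).le]
    calc ‖S.φ x v t - S.φ y v t‖ ≤ ‖x - y‖ * Real.exp (L * t) :=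
          S.φ_lip hL1 hR hLip hv x y ht
      _ = Real.exp (L * t) * ‖x - y‖ := by ring
  exact this.continuous

lemma shift_mem_ctrl (S : CAS d m) {v} (hv : v ∈ S.ctrl) (a : ℝ) :
    (fun s => v (a + s)) ∈ S.ctrl :=
  ⟨hv.1.comp (measurable_id.const_add a), fun t => hv.2 _⟩

/-- The cocycle/shift property. -/
lemma φ_shift (S : CAS d m) {L R : ℝ} (hL1 : 1 ≤ L)
    (hR : ∀ w ∈ S.V, ‖w‖ ≤ R)
    (hLip : ∀ v ∈ S.ctrl, ∀ (s : ℝ) (z z' : Fin d → ℝ),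
      ‖S.G v s z - S.G v s z'‖ ≤ L * ‖z - z'‖)
    {v} (hv : v ∈ S.ctrl) (x : Fin d → ℝ) {a : ℝ} (ha : 0 ≤ a) :
    ∀ t, 0 ≤ t → S.φ x v (a + t) = S.φ (S.φ x v a) (fun s => v (a + s)) t := by
  have hb : Continuous fun t => S.φ x v (a + t) :=
    (S.φ_cont x v).comp (continuous_const.add continuous_id)
  have hsol : ∀ t, 0 ≤ t → S.φ x v (a + t)
      = S.φ x v (a + 0) + ∫ s in (0:ℝ)..t, S.G v (a + s) (S.φ x v (a + s)) := by
    intro t ht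
    have h1 := S.φ_sol' hv x (show (0:ℝ) ≤ a + t by linarith)
    have h2 := S.φ_sol' hv x ha
    have hadd := intervalIntegral.integral_add_adjacent_intervals
      (S.G_integrable hv hR (S.φ_cont x v) 0 a)
      (S.G_integrable hv hR (S.φ_cont x v) a (a + t))
    have hcomp : (∫ s in (0:ℝ)..t, S.G v (a + s) (S.φ x v (a + s)))
        = ∫ s in a..(a + t), S.G v s (S.φ x v s) := by
      have := intervalIntegral.integral_comp_add_left
        (a := (0:ℝ)) (b := t) (fun s => S.G v s (S.φ x v s)) a
      simpa using this
    rw [add_zero]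
    calc S.φ x v (a + t)
        = S.φ x v 0 + ∫ s in (0:ℝ)..(a + t), S.G v s (S.φ x v s) := h1
      _ = S.φ x v 0 + ((∫ s in (0:ℝ)..a, S.G v s (S.φ x v s))
            + ∫ s in a..(a + t), S.G v s (S.φ x v s)) := by rw [hadd]
      _ = (S.φ x v 0 + ∫ s in (0:ℝ)..a, S.G v s (S.φ x v s))
            + ∫ s in a..(a + t), S.G v s (S.φ x v s) := by rw [add_assoc]
      _ = S.φ x v a + ∫ s in a..(a + t), S.G v s (S.φ x v s) := by rw [← h2]
      _ = S.φ x v a + ∫ s in (0:ℝ)..t, S.G v (a + s) (S.φ x v (a + s)) := by rw [hcomp]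
  intro t ht
  have := S.sol_eq_φ hL1 hR hLip (S.shift_mem_ctrl hv a)
    (a := fun t => S.φ x v (a + t)) hb (fun u hu => hsol u hu) t ht
  simpa only [add_zero] using this

/-- Two controls agreeing on `[0, t]` give the same solution at time `t`. -/
lemma φ_congr_ctrl (S : CAS d m) {L R : ℝ} (hL1 : 1 ≤ L)
    (hR : ∀ w ∈ S.V, ‖w‖ ≤ R)
    (hLip : ∀ v ∈ S.ctrl, ∀ (s : ℝ) (z z' : Fin d → ℝ),
      ‖S.G v s z - S.G v s z'‖ ≤ L * ‖z - z'‖)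
    {v w} (hv : v ∈ S.ctrl) (hw : w ∈ S.ctrl) (y : Fin d → ℝ) {t : ℝ} (ht : 0 ≤ t)
    (heq : ∀ s ∈ Icc (0:ℝ) t, v s = w s) :
    S.φ y v t = S.φ y w t := by
  have := S.gronwall hL1 hR hLip ht hv hw (S.φ_cont y v) (S.φ_cont y w)
    (fun u hu => S.φ_sol' hv y hu.1) (fun u hu => S.φ_sol' hw y hu.1)
    heq t ⟨ht, le_rfl⟩
  rw [S.φ_init, S.φ_init, sub_self, norm_zero, zero_mul] at this
  exact sub_eq_zero.1 (norm_le_zero_iff.1 this)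

lemma concat_mem_ctrl (S : CAS d m) {v w} (hv : v ∈ S.ctrl) (hw : w ∈ S.ctrl) (a : ℝ) :
    (fun s => if s < a then v s else w (s - a)) ∈ S.ctrl := by
  refine ⟨Measurable.ite measurableSet_Iio hv.1
    (hw.1.comp (measurable_id.sub measurable_const)), fun t => ?_⟩
  by_cases h : t < a
  · simp only [if_pos h]; exact hv.2 t
  · simp only [if_neg h]; exact hw.2 _

lemma concat_left (S : CAS d m) {L R : ℝ} (hL1 : 1 ≤ L)
    (hR : ∀ w ∈ S.V, ‖w‖ ≤ R)
    (hLip : ∀ v ∈ S.ctrl, ∀ (s : ℝ) (z z' : Fin d → ℝ),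
      ‖S.G v s z - S.G v s z'‖ ≤ L * ‖z - z'‖)
    {v w} (hv : v ∈ S.ctrl) (hw : w ∈ S.ctrl) {a : ℝ} (ha : 0 ≤ a) (x : Fin d → ℝ) :
    ∀ t ∈ Icc (0:ℝ) a,
      S.φ x (fun s => if s < a then v s else w (s - a)) t = S.φ x v t := by
  set u : ℝ → Fin m → ℝ := fun s => if s < a then v s else w (s - a) with hudef
  have hu : u ∈ S.ctrl := S.concat_mem_ctrl hv hw a
  have h1 : ∀ t ∈ Ico (0:ℝ) a, S.φ x u t = S.φ x v t := by
    intro t htm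
    exact S.φ_congr_ctrl hL1 hR hLip hu hv x htm.1
      (fun s hs => if_pos (lt_of_le_of_lt hs.2 htm.2))
  rcases eq_or_lt_of_le ha with rfl | ha'
  · intro t htm
    have ht0 : t = 0 := le_antisymm htm.2 htm.1
    subst ht0
    rw [S.φ_init, S.φ_init]
  · have heqon : EqOn (S.φ x u) (S.φ x v) (closure (Ico (0:ℝ) a)) :=
      Set.EqOn.closure h1 (S.φ_cont x u) (S.φ_cont x v)
    intro t htm
    apply heqon
    rw [closure_Ico (ne_of_lt ha')]
    exact htm

lemma concat_right (S : CAS d m) {L R : ℝ} (hL1 : 1 ≤ L)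
    (hR : ∀ w ∈ S.V, ‖w‖ ≤ R)
    (hLip : ∀ v ∈ S.ctrl, ∀ (s : ℝ) (z z' : Fin d → ℝ),
      ‖S.G v s z - S.G v s z'‖ ≤ L * ‖z - z'‖)
    {v w} (hv : v ∈ S.ctrl) (hw : w ∈ S.ctrl) {a : ℝ} (ha : 0 ≤ a) (x : Fin d → ℝ) :
    ∀ t, 0 ≤ t →
      S.φ x (fun s => if s < a then v s else w (s - a)) (a + t)
        = S.φ (S.φ x v a) w t := by
  set u : ℝ → Fin m → ℝ := fun s => if s < a then v s else w (s - a) with hudef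
  have hu : u ∈ S.ctrl := S.concat_mem_ctrl hv hw a
  intro t ht
  rw [S.φ_shift hL1 hR hLip hu x ha t ht]
  rw [S.concat_left hL1 hR hLip hv hw ha x a ⟨ha, le_rfl⟩]
  apply S.φ_congr_ctrl hL1 hR hLip (S.shift_mem_ctrl hu a) hw _ ht
  intro s hs
  have : ¬ (a + s < a) := by linarith [hs.1]
  simp only [hudef, if_neg this, add_sub_cancel_left]

lemma reach_trans_s7 (S : CAS d m) {L R : ℝ} (hL1 : 1 ≤ L)
    (hR : ∀ w ∈ S.V, ‖w‖ ≤ R)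
    (hLip : ∀ v ∈ S.ctrl, ∀ (s : ℝ) (z z' : Fin d → ℝ),
      ‖S.G v s z - S.G v s z'‖ ≤ L * ‖z - z'‖)
    {x y z : Fin d → ℝ} (hxy : y ∈ S.reach x) (hyz : z ∈ S.reach y) :
    z ∈ S.reach x := by
  obtain ⟨v, hv, a, ha, hφa⟩ := hxy
  obtain ⟨w, hw, t, ht, hφt⟩ := hyz
  refine ⟨fun s => if s < a then v s else w (s - a), S.concat_mem_ctrl hv hw a,
    a + t, by linarith, ?_⟩
  rw [S.concat_right hL1 hR hLip hv hw ha x t ht, hφa, hφt]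

/-- The time-`δ` map is an open map, for small `δ`. -/
lemma isOpenMap_step (S : CAS d m) {L R : ℝ} (hL1 : 1 ≤ L)
    (hR : ∀ w ∈ S.V, ‖w‖ ≤ R)
    (hLip : ∀ v ∈ S.ctrl, ∀ (s : ℝ) (z z' : Fin d → ℝ),
      ‖S.G v s z - S.G v s z'‖ ≤ L * ‖z - z'‖)
    {v} (hv : v ∈ S.ctrl) {δ : ℝ} (hδ0 : 0 ≤ δ)
    (hsmall : L * δ * Real.exp (L * δ) < 1) :
    IsOpenMap fun z : Fin d → ℝ => S.φ z v δ := by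
  have hL0 : (0:ℝ) < L := lt_of_lt_of_le one_pos hL1
  set c : NNReal := (L * δ * Real.exp (L * δ)).toNNReal with hcdef
  have hcoe : (c : ℝ) = L * δ * Real.exp (L * δ) :=
    Real.coe_toNNReal _ (by positivity)
  have happrox : ApproximatesLinearOn (fun z => S.φ z v δ)
      ((ContinuousLinearEquiv.refl ℝ (Fin d → ℝ) :
        (Fin d → ℝ) ≃L[ℝ] (Fin d → ℝ)) : (Fin d → ℝ) →L[ℝ] (Fin d → ℝ))
      univ c := by
    intro z _ z' _
    have hIz := S.G_integrable hv hR (S.φ_cont z v) 0 δ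
    have hIz' := S.G_integrable hv hR (S.φ_cont z' v) 0 δ
    have key : S.φ z v δ - S.φ z' v δ - (z - z')
        = ∫ s in (0:ℝ)..δ, (S.G v s (S.φ z v s) - S.G v s (S.φ z' v s)) := by
      rw [intervalIntegral.integral_sub hIz hIz']
      have e1 := S.φ_sol' hv z hδ0
      have e2 := S.φ_sol' hv z' hδ0
      rw [S.φ_init] at e1 e2
      rw [e1, e2]
      abel
    have hsimp : ((ContinuousLinearEquiv.refl ℝ (Fin d → ℝ) :
        (Fin d → ℝ) ≃L[ℝ] (Fin d → ℝ)) : (Fin d → ℝ) →L[ℝ] (Fin d → ℝ)) (z - z')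
          = z - z' := rfl
    rw [hsimp, key]
    have hptw : ∀ s ∈ Icc (0:ℝ) δ,
        ‖S.G v s (S.φ z v s) - S.G v s (S.φ z' v s)‖
          ≤ L * (‖z - z'‖ * Real.exp (L * δ)) := by
      intro s hs
      calc ‖S.G v s (S.φ z v s) - S.G v s (S.φ z' v s)‖
          ≤ L * ‖S.φ z v s - S.φ z' v s‖ := hLip v hv s _ _
        _ ≤ L * (‖z - z'‖ * Real.exp (L * s)) :=
            mul_le_mul_of_nonneg_left (S.φ_lip hL1 hR hLip hv z z' hs.1) hL0.le
        _ ≤ L * (‖z - z'‖ * Real.exp (L * δ)) := by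
            have : Real.exp (L * s) ≤ Real.exp (L * δ) :=
              Real.exp_le_exp.2 (mul_le_mul_of_nonneg_left hs.2 hL0.le)
            have h2 : ‖z - z'‖ * Real.exp (L * s) ≤ ‖z - z'‖ * Real.exp (L * δ) :=
              mul_le_mul_of_nonneg_left this (norm_nonneg _)
            exact mul_le_mul_of_nonneg_left h2 hL0.le
    calc ‖∫ s in (0:ℝ)..δ, (S.G v s (S.φ z v s) - S.G v s (S.φ z' v s))‖
        ≤ ∫ s in (0:ℝ)..δ, ‖S.G v s (S.φ z v s) - S.G v s (S.φ z' v s)‖ :=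
          intervalIntegral.norm_integral_le_integral_norm hδ0
      _ ≤ ∫ _s in (0:ℝ)..δ, L * (‖z - z'‖ * Real.exp (L * δ)) :=
          intervalIntegral.integral_mono_on hδ0 (hIz.sub hIz').norm
            (intervalIntegrable_const) hptw
      _ = δ * (L * (‖z - z'‖ * Real.exp (L * δ))) := by
          rw [intervalIntegral.integral_const, smul_eq_mul, sub_zero]
      _ = (c : ℝ) * ‖z - z'‖ := by rw [hcoe]; ring
  have hc : Subsingleton (Fin d → ℝ) ∨
      c < ‖(((ContinuousLinearEquiv.refl ℝ (Fin d → ℝ)).symm :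
        (Fin d → ℝ) ≃L[ℝ] (Fin d → ℝ)) : (Fin d → ℝ) →L[ℝ] (Fin d → ℝ))‖₊⁻¹ := by
    rcases subsingleton_or_nontrivial (Fin d → ℝ) with hss | hnt
    · exact Or.inl hss
    · right
      have hnorm : ‖(((ContinuousLinearEquiv.refl ℝ (Fin d → ℝ)).symm :
          (Fin d → ℝ) ≃L[ℝ] (Fin d → ℝ)) : (Fin d → ℝ) →L[ℝ] (Fin d → ℝ))‖₊ = 1 := by
        rw [ContinuousLinearEquiv.refl_symm, ContinuousLinearEquiv.coe_refl]
        exact ContinuousLinearMap.nnnorm_id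
      rw [hnorm, inv_one]
      rw [← NNReal.coe_lt_coe, hcoe, NNReal.coe_one]
      exact hsmall
  intro U hU
  have h1 := (happrox.toOpenPartialHomeomorph (fun z => S.φ z v δ) univ hc
    isOpen_univ).isOpen_image_of_subset_source hU (by
      rw [ApproximatesLinearOn.toOpenPartialHomeomorph_source]; exact subset_univ U)
  rwa [ApproximatesLinearOn.toOpenPartialHomeomorph_coe] at h1

/-- The time-`t` map is an open map for every `t ≥ 0`. -/
lemma isOpenMap_φ (S : CAS d m) {L R : ℝ} (hL1 : 1 ≤ L)
    (hR : ∀ w ∈ S.V, ‖w‖ ≤ R)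
    (hLip : ∀ v ∈ S.ctrl, ∀ (s : ℝ) (z z' : Fin d → ℝ),
      ‖S.G v s z - S.G v s z'‖ ≤ L * ‖z - z'‖)
    {v} (hv : v ∈ S.ctrl) {t : ℝ} (ht : 0 ≤ t) :
    IsOpenMap fun z : Fin d → ℝ => S.φ z v t := by
  have hL0 : (0:ℝ) < L := lt_of_lt_of_le one_pos hL1
  set δ₀ : ℝ := (4 * L)⁻¹ with hδ₀def
  have hδ₀pos : 0 < δ₀ := by positivity
  have hsmall : ∀ δ : ℝ, 0 ≤ δ → δ ≤ δ₀ → L * δ * Real.exp (L * δ) < 1 := by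
    intro δ h0 h1
    have hLδ : L * δ ≤ 4⁻¹ := by
      have : L * δ ≤ L * (4 * L)⁻¹ := mul_le_mul_of_nonneg_left h1 hL0.le
      calc L * δ ≤ L * (4 * L)⁻¹ := this
        _ = 4⁻¹ := by field_simp
    have hexp : Real.exp (L * δ) ≤ Real.exp 1 :=
      Real.exp_le_exp.2 (by linarith)
    have he1 : Real.exp 1 < 2.7182818286 := Real.exp_one_lt_d9
    have hnn : 0 ≤ L * δ := mul_nonneg hL0.le h0
    nlinarith [Real.exp_pos (L * δ)]
  have main : ∀ n : ℕ, ∀ v ∈ S.ctrl, ∀ t : ℝ, 0 ≤ t → t ≤ n * δ₀ →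
      IsOpenMap fun z : Fin d → ℝ => S.φ z v t := by
    intro n
    induction n with
    | zero =>
      intro v hv t ht ht'
      have ht0 : t = 0 := le_antisymm (by simpa using ht') ht
      subst ht0
      have : (fun z : Fin d → ℝ => S.φ z v 0) = id := funext fun z => S.φ_init z v
      rw [this]
      exact IsOpenMap.id
    | succ n IH =>
      intro v hv t ht ht'
      by_cases hle : t ≤ n * δ₀
      · exact IH v hv t ht hle
      · push_neg at hle
        set s : ℝ := (n : ℝ) * δ₀ with hsdef
        set δ : ℝ := t - s with hδdef
        have hs0 : 0 ≤ s := by positivity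
        have hδpos : 0 ≤ δ := by simp only [hδdef]; linarith
        have hδle : δ ≤ δ₀ := by
          have : t ≤ ((n : ℝ) + 1) * δ₀ := by
            have := ht'
            push_cast at this
            linarith
          simp only [hδdef, hsdef]
          linarith
        have hcomp : (fun z : Fin d → ℝ => S.φ z v t)
            = (fun y => S.φ y (fun r => v (s + r)) δ) ∘ (fun z => S.φ z v s) := by
          funext z
          simp only [Function.comp]
          rw [← S.φ_shift hL1 hR hLip hv z hs0 δ hδpos]
          congr 1
          simp only [hδdef]
          ring
        rw [hcomp]
        exact (S.isOpenMap_step hL1 hR hLip (S.shift_mem_ctrl hv s) hδpos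
          (hsmall δ hδpos hδle)).comp (IH v hv s hs0 le_rfl)
  obtain ⟨n, hn⟩ := exists_nat_ge (t / δ₀)
  exact main n v hv t ht (by
    rw [div_le_iff₀ hδ₀pos] at hn
    linarith)

end CAS



/-- If the system is locally accessible on a positively invariant
set `M`, then every invariant control set `C ⊆ M` has nonempty interior, satisfies
`cl_M (int C) = C`, both `C` and `int C` are positively invariant, and
`int C ⊆ 𝒪⁺(x)` and `C = cl_M 𝒪⁺(x)` for all `x ∈ C`. -/
theorem stmt7 {d m : ℕ} (S : CAS d m) (M C : Set (Fin d → ℝ))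
    (hM : S.posInv M) (hacc : S.locAccOn M)
    (hC : S.isInvControlSet C) (hCM : C ⊆ M) :
    (interior C).Nonempty ∧
    closure (interior C) ∩ M = C ∧
    S.posInv C ∧ S.posInv (interior C) ∧
    ∀ x ∈ C, interior C ⊆ S.reach x ∧ closure (S.reach x) ∩ M = C := by
  obtain ⟨⟨⟨x₀, hx₀⟩, ⟨hinv1, hinv2⟩, hmax⟩, hclos⟩ := hC
  obtain ⟨L, R, hL1, hR, hLip⟩ := S.exists_LR
  obtain ⟨v₀, hv₀, -⟩ := hinv1 x₀ hx₀
  have hφ_reach : ∀ (x : Fin d → ℝ) v, v ∈ S.ctrl → ∀ t : ℝ, 0 ≤ t →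
      S.φ x v t ∈ S.reach x := fun x v hv t ht => ⟨v, hv, t, ht, rfl⟩
  have htrans : ∀ {x y z : Fin d → ℝ}, y ∈ S.reach x → z ∈ S.reach y →
      z ∈ S.reach x := fun hxy hyz => S.reach_trans_s7 hL1 hR hLip hxy hyz
  have hreachLe : ∀ (T : ℝ) (x : Fin d → ℝ), S.reachLe T x ⊆ S.reach x :=
    fun T x y ⟨v, hv, t, ht, he⟩ => ⟨v, hv, t, ht.1, he⟩
  -- trajectories starting in `closure C` stay in `closure C`
  have hreach_closure : ∀ x ∈ closure C, ∀ v ∈ S.ctrl, ∀ t : ℝ, 0 ≤ t →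
      S.φ x v t ∈ closure C := by
    intro x hx v hv t ht
    have hmapsto : MapsTo (fun z => S.φ z v t) C (closure C) := by
      intro c hc
      rw [hclos c hc]
      exact subset_closure (hφ_reach c v hv t ht)
    have := hmapsto.closure (S.φ_cont_x hL1 hR hLip hv ht) hx
    rwa [closure_closure] at this
  have hreach_sub_clC : ∀ x ∈ closure C, S.reach x ⊆ closure C := by
    rintro x hx y ⟨v, hv, t, ht, rfl⟩
    exact hreach_closure x hx v hv t ht
  -- Step 1 : `closure C ∩ M = C`
  have hDC : closure C ∩ M = C := by
    refine hmax _ (fun c hc => ⟨subset_closure hc, hCM hc⟩) ⟨?_, ?_⟩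
    · intro x hx
      exact ⟨v₀, hv₀, fun t ht =>
        ⟨hreach_closure x hx.1 v₀ hv₀ t ht, hM x hx.2 v₀ hv₀ t ht⟩⟩
    · intro x hx
      obtain ⟨u, hu⟩ := (hacc x hx.2 1 one_pos univ Filter.univ_mem).1
      have huo : u ∈ interior (S.reachLe 1 x) := hu.1
      have husub : interior (S.reachLe 1 x) ⊆ S.reach x :=
        interior_subset.trans (hreachLe 1 x)
      have huclC : u ∈ closure C := hreach_sub_clC x hx.1 (husub huo)
      obtain ⟨c', hc'⟩ := mem_closure_iff.1 huclC _ isOpen_interior huo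
      have hc'C : c' ∈ C := hc'.2
      have hc'r : c' ∈ S.reach x := husub hc'.1
      have h1 : closure C ⊆ closure (S.reach x) :=
        closure_minimal ((hinv2 c' hc'C).trans
          (closure_mono fun z hz => htrans hc'r hz)) isClosed_closure
      intro y hy
      exact h1 hy.1
  have hreach_sub_C : ∀ x ∈ C, S.reach x ⊆ C := by
    rintro x hx y ⟨v, hv, t, ht, rfl⟩
    rw [← hDC]
    exact ⟨hreach_sub_clC x (subset_closure hx) (hφ_reach x v hv t ht),
      hM x (hCM hx) v hv t ht⟩
  have hposC : S.posInv C := fun x hx v hv t ht =>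
    hreach_sub_C x hx (hφ_reach x v hv t ht)
  have hint : ∀ x ∈ C, interior (S.reachLe 1 x) ⊆ interior C := fun x hx =>
    interior_maximal
      (interior_subset.trans ((hreachLe 1 x).trans (hreach_sub_C x hx)))
      isOpen_interior
  have hne_int : (interior C).Nonempty := by
    obtain ⟨u, hu⟩ := (hacc x₀ (hCM hx₀) 1 one_pos univ Filter.univ_mem).1
    exact ⟨u, hint x₀ hx₀ hu.1⟩
  have hclint : closure (interior C) ∩ M = C := by
    apply Subset.antisymm
    · intro y hy
      rw [← hDC]
      exact ⟨closure_mono interior_subset hy.1, hy.2⟩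
    · intro x hx
      refine ⟨?_, hCM hx⟩
      rw [mem_closure_iff]
      intro o ho hxo
      obtain ⟨u, hu⟩ := (hacc x (hCM hx) 1 one_pos o (ho.mem_nhds hxo)).1
      exact ⟨u, hu.2, hint x hx hu.1⟩
  have h5a : ∀ x ∈ C, interior C ⊆ S.reach x := by
    intro x hx y hy
    obtain ⟨z, hz⟩ := (hacc y (hCM (interior_subset hy)) 1 one_pos
      (interior C) (isOpen_interior.mem_nhds hy)).2
    have hzC : z ∈ closure (S.reach x) := hinv2 x hx (interior_subset hz.2)
    obtain ⟨p, hp⟩ := mem_closure_iff.1 hzC _ isOpen_interior hz.1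
    obtain ⟨v, hv, t, ht, he⟩ := interior_subset hp.1
    exact htrans hp.2 ⟨v, hv, t, ht.1, he⟩
  have hpos_int : S.posInv (interior C) := by
    intro x hx v hv t ht
    have hopen := S.isOpenMap_φ hL1 hR hLip hv ht
    have himg : (fun z => S.φ z v t) '' interior C ⊆ C := by
      rintro _ ⟨z, hz, rfl⟩
      exact hreach_sub_C z (interior_subset hz) (hφ_reach z v hv t ht)
    exact interior_maximal himg (hopen _ isOpen_interior) ⟨x, hx, rfl⟩
  refine ⟨hne_int, hclint, hposC, hpos_int, fun x hx => ⟨h5a x hx, ?_⟩⟩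
  rw [← hclos x hx]
  exact hDC
end
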